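/- Let G be a connected graph of order n ≥ 2 and let K_{n'} be the complete graph of order n' ≥ 2. For any vertex v of K_{n'}, the strong metric dimension of the rooted product graph satisfies dim_s(G∘_v K_{n'}) = n(n' − 1) − 1. -/

import Mathlib

namespace RootedStrong

variable {V : Type*}

/-- `u` is maximally distant from `v`: every neighbor `w` of `u` satisfies `d(v,w) ≤ d(u,v)`. -/
def MaxDistant (G : SimpleGraph V) (u v : V) : Prop :=
  ∀ w, G.Adj u w → G.dist v w ≤ G.dist u v

/-- `u` and `v` are mutually maximally distant. -/
def MMD (G : SimpleGraph V) (u v : V) : Prop :=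
  MaxDistant G u v ∧ MaxDistant G v u

/-- The boundary `∂(G)` of a graph. -/
def boundary (G : SimpleGraph V) : Set V := {u | ∃ v, MMD G u v}

/-- A vertex is simplicial if its neighborhood induces a complete graph. -/
def Simplicial (G : SimpleGraph V) (u : V) : Prop :=
  ∀ x ∈ G.neighborSet u, ∀ y ∈ G.neighborSet u, x ≠ y → G.Adj x y

/-- The set `σ(G)` of simplicial vertices. -/
def simplicialSet (G : SimpleGraph V) : Set V := {u | Simplicial G u}

/-- `w` strongly resolves `u` and `v`. -/
def StronglyResolves (G : SimpleGraph V) (w u v : V) : Prop :=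
  G.dist w u = G.dist w v + G.dist v u ∨ G.dist w v = G.dist w u + G.dist u v

/-- A set of vertices is a strong metric generator if every pair of distinct vertices is
strongly resolved by some of its elements. -/
def IsStrongGenerator (G : SimpleGraph V) (S : Set V) : Prop :=
  ∀ u v : V, u ≠ v → ∃ w ∈ S, StronglyResolves G w u v

/-- The strong metric dimension of a graph. -/
noncomputable def sdim (G : SimpleGraph V) [Fintype V] : ℕ :=
  sInf {n | ∃ S : Finset V, S.card = n ∧ IsStrongGenerator G (S : Set V)}

/-- A strong metric basis: a strong metric generator of minimum cardinality. -/
def IsStrongBasis (G : SimpleGraph V) [Fintype V] (S : Finset V) : Prop :=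
  IsStrongGenerator G (S : Set V) ∧ S.card = sdim G

/-- The rooted product graph `G ∘_v H`. -/
def rootedProd {α β : Type*} (G : SimpleGraph α) (H : SimpleGraph β) (v : β) :
    SimpleGraph (α × β) where
  Adj p q := (p.1 = q.1 ∧ H.Adj p.2 q.2) ∨ (p.2 = v ∧ q.2 = v ∧ G.Adj p.1 q.1)
  symm := ⟨by
    rintro ⟨a, x⟩ ⟨b, y⟩ (⟨h1, h2⟩ | ⟨h1, h2, h3⟩)
    · exact Or.inl ⟨h1.symm, h2.symm⟩
    · exact Or.inr ⟨h2, h1, h3.symm⟩⟩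
  loopless := ⟨by
    rintro ⟨a, x⟩ (⟨_, h2⟩ | ⟨_, _, h3⟩)
    · exact H.loopless.irrefl _ h2
    · exact G.loopless.irrefl _ h3⟩

/-- Two distinct vertices are true twins if they have equal closed neighborhoods. -/
def TrueTwins (G : SimpleGraph V) (x y : V) : Prop :=
  x ≠ y ∧ ∀ z, (z = x ∨ G.Adj x z) ↔ (z = y ∨ G.Adj y z)

/-- A twin-free clique: a clique containing no pair of true twins. -/
def IsTwinFreeClique (G : SimpleGraph V) (X : Set V) : Prop :=
  (∀ x ∈ X, ∀ y ∈ X, x ≠ y → G.Adj x y) ∧ ∀ x ∈ X, ∀ y ∈ X, ¬ TrueTwins G x y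

/-- The twin-free clique number `ϖ(G)`. -/
noncomputable def twinFreeCliqueNum (G : SimpleGraph V) : ℕ :=
  sSup {n | ∃ X : Set V, IsTwinFreeClique G X ∧ X.ncard = n}


/-! ### Auxiliary machinery -/

open SimpleGraph

open Classical in
/-- `0` if `z = v`, `1` otherwise. -/
noncomputable def eps {β : Type*} (v z : β) : ℕ := if z = v then 0 else 1

lemma eps_le_one {β : Type*} (v z : β) : eps v z ≤ 1 := by
  unfold eps; split <;> omega

lemma eps_root {β : Type*} (v : β) : eps v v = 0 := by simp [eps]

lemma eps_ne {β : Type*} {v z : β} (h : z ≠ v) : eps v z = 1 := by simp [eps, h]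

open Classical in
/-- The candidate distance function on `G ∘ᵥ K`. -/
noncomputable def D {α β : Type*} (G : SimpleGraph α) (v : β) (p q : α × β) : ℕ :=
  if p.1 = q.1 then (if p.2 = q.2 then 0 else 1)
  else G.dist p.1 q.1 + eps v p.2 + eps v q.2

section Aux

variable {α β : Type*} (G : SimpleGraph α) (v : β)

lemma D_of_ne {p q : α × β} (h : p.1 ≠ q.1) :
    D G v p q = G.dist p.1 q.1 + eps v p.2 + eps v q.2 := by
  unfold D; rw [if_neg h]

lemma D_self (p : α × β) : D G v p p = 0 := by simp [D]

lemma D_le_one_of_fst_eq {p q : α × β} (h : p.1 = q.1) : D G v p q ≤ 1 := by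
  unfold D; rw [if_pos h]; split <;> omega

/-- The root embedding `G → G ∘ᵥ K`. -/
def rootHom : G →g rootedProd G (⊤ : SimpleGraph β) v where
  toFun a := (a, v)
  map_rel' := fun h => Or.inr ⟨rfl, rfl, h⟩

lemma exists_walk (hG : G.Connected) (p q : α × β) :
    ∃ W : (rootedProd G (⊤ : SimpleGraph β) v).Walk p q, W.length = D G v p q := by
  obtain ⟨a, x⟩ := p; obtain ⟨b, y⟩ := q
  by_cases hab : a = b
  · subst hab
    by_cases hxy : x = y
    · subst hxy
      exact ⟨.nil, by simp [D_self]⟩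
    · refine ⟨.cons (show (rootedProd G (⊤ : SimpleGraph β) v).Adj (a, x) (a, y) from
        Or.inl ⟨rfl, by simpa using hxy⟩) .nil, ?_⟩
      unfold D; simp [hxy]
  · obtain ⟨P, hP⟩ := (hG a b).exists_walk_length_eq_dist
    have hadj : ∀ z : β, z ≠ v →
        (rootedProd G (⊤ : SimpleGraph β) v).Adj (b, v) (b, z) :=
      fun z hz => Or.inl ⟨rfl, by simpa using (Ne.symm hz)⟩
    have hadj2 : ∀ z : β, z ≠ v →
        (rootedProd G (⊤ : SimpleGraph β) v).Adj (a, z) (a, v) :=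
      fun z hz => Or.inl ⟨rfl, by simpa using hz⟩
    have hD : D G v (a, x) (b, y) = G.dist a b + eps v x + eps v y := D_of_ne G v hab
    by_cases hy : y = v
    · subst y
      by_cases hx : x = v
      · subst x
        refine ⟨(P.map (rootHom G v)).copy (show (rootHom G v) a = (a, v) from rfl)
          (show (rootHom G v) b = (b, v) from rfl), ?_⟩
        rw [Walk.length_copy, Walk.length_map, hP, hD, eps_root]
        all_goals omega
      · refine ⟨.cons (hadj2 x hx) ((P.map (rootHom G v)).copy (show (rootHom G v) a = (a, v) from rfl)
          (show (rootHom G v) b = (b, v) from rfl)), ?_⟩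
        rw [Walk.length_cons, Walk.length_copy, Walk.length_map, hP, hD, eps_root, eps_ne hx]
        all_goals omega
    · by_cases hx : x = v
      · subst x
        refine ⟨((P.map (rootHom G v)).copy (show (rootHom G v) a = (a, v) from rfl)
          (show (rootHom G v) b = (b, v) from rfl)).concat (hadj y hy), ?_⟩
        rw [Walk.length_concat, Walk.length_copy, Walk.length_map, hP, hD, eps_root, eps_ne hy]
        all_goals omega
      · refine ⟨.cons (hadj2 x hx) (((P.map (rootHom G v)).copy (show (rootHom G v) a = (a, v) from rfl)
          (show (rootHom G v) b = (b, v) from rfl)).concat (hadj y hy)), ?_⟩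
        rw [Walk.length_cons, Walk.length_concat, Walk.length_copy, Walk.length_map, hP, hD,
          eps_ne hx, eps_ne hy]
        all_goals omega

lemma D_step (hG : G.Connected) (q : α × β) {p p' : α × β}
    (h : (rootedProd G (⊤ : SimpleGraph β) v).Adj p p') :
    D G v p q ≤ 1 + D G v p' q := by
  obtain ⟨a, x⟩ := p; obtain ⟨a', x'⟩ := p'; obtain ⟨b, y⟩ := q
  by_cases hab : a = b
  · exact le_trans (D_le_one_of_fst_eq G v hab) (by omega)
  · rcases h with ⟨h1, _h2⟩ | ⟨h1, h2, h3⟩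
    · -- edge inside a copy
      simp only at h1
      subst h1
      rw [D_of_ne G v hab, D_of_ne G v hab]
      have := eps_le_one v x
      have := eps_le_one v x'
      simp only
      omega
    · -- edge between roots
      simp only at h1 h2 h3
      subst x; subst x'
      have hd1 : G.dist a a' = 1 := dist_eq_one_iff_adj.mpr h3
      by_cases h4 : a' = b
      · rw [D_of_ne G v hab]
        have hdd : G.dist a b = 1 := by rw [← h4]; exact hd1
        have h8 : D G v (a', v) (b, y) = eps v y := by
          unfold D
          rw [if_pos (show ((a', v) : α × β).1 = ((b, y) : α × β).1 from h4)]
          by_cases hvy : (v : β) = y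
          · rw [if_pos hvy, ← hvy, eps_root]
          · rw [if_neg hvy, eps_ne (fun h => hvy h.symm)]
        rw [h8]
        simp only [eps_root]
        omega
      · rw [D_of_ne G v hab,
          D_of_ne G v (show ((a', v) : α × β).1 ≠ ((b, y) : α × β).1 from h4)]
        have tri : G.dist a b ≤ G.dist a a' + G.dist a' b := hG.dist_triangle
        simp only [eps_root]
        omega

lemma D_le_length (hG : G.Connected) {p q : α × β}
    (W : (rootedProd G (⊤ : SimpleGraph β) v).Walk p q) :
    D G v p q ≤ W.length := by
  induction W with
  | nil => simp [D_self]
  | cons h W ih =>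
      rw [Walk.length_cons]
      exact le_trans (D_step G v hG _ h) (by omega)

lemma rooted_dist_eq (hG : G.Connected) (p q : α × β) :
    (rootedProd G (⊤ : SimpleGraph β) v).dist p q = D G v p q := by
  obtain ⟨W, hW⟩ := exists_walk G v hG p q
  refine le_antisymm (hW ▸ SimpleGraph.dist_le W) ?_
  have hreach : (rootedProd G (⊤ : SimpleGraph β) v).Reachable p q := ⟨W⟩
  obtain ⟨W', hW'⟩ := hreach.exists_walk_length_eq_dist
  exact hW' ▸ D_le_length G v hG W'

/-- Non-root vertices are maximally distant from any other non-root vertex. -/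
lemma maxDistant_nonroot (hG : G.Connected) {a b : α} {x y : β}
    (hx : x ≠ v) (hy : y ≠ v) (hpq : (a, x) ≠ (b, y)) :
    MaxDistant (rootedProd G (⊤ : SimpleGraph β) v) (a, x) (b, y) := by
  intro w hw
  rcases hw with ⟨h1, _h2⟩ | ⟨h1, _, _⟩
  swap
  · exact absurd h1 hx
  · simp only at h1
    rw [rooted_dist_eq G v hG, rooted_dist_eq G v hG]
    by_cases hab : b = a
    · subst b
      have hxy : x ≠ y := fun h => hpq (by rw [h])
      have h5 : D G v (a, y) w ≤ 1 := D_le_one_of_fst_eq G v (by simp [← h1])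
      have h6 : D G v (a, x) (a, y) = 1 := by
        unfold D; rw [if_pos rfl, if_neg hxy]
      omega
    · have hbw : (b : α) ≠ w.1 := by rw [← h1]; exact hab
      rw [D_of_ne G v (show ((b, y) : α × β).1 ≠ w.1 from hbw),
        D_of_ne G v (show ((a, x) : α × β).1 ≠ b from fun h => hab h.symm)]
      simp only
      have hw1 : w.1 = a := h1.symm
      rw [hw1]
      have e1 : eps v y = 1 := eps_ne hy
      have e2 : eps v x = 1 := eps_ne hx
      have e3 : eps v w.2 ≤ 1 := eps_le_one v w.2
      have e4 : G.dist b a = G.dist a b := SimpleGraph.dist_comm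
      omega

/-- If `w` strongly resolves a mutually maximally distant pair, then `w` is one of the pair. -/
lemma resolve_aux {V : Type*} {G : SimpleGraph V} (hC : G.Connected) {a b w : V}
    (hmd : MaxDistant G b a) (hwb : w ≠ b)
    (hr : G.dist w a = G.dist w b + G.dist b a) : False := by
  have h1 : 0 < G.dist b w := hC.pos_dist_of_ne (Ne.symm hwb)
  obtain ⟨W, hW⟩ := (hC b w).exists_walk_length_eq_dist
  cases W with
  | nil => rw [← hW] at h1; simp at h1
  | @cons _ c _ h W' =>
      rw [Walk.length_cons] at hW
      have f2 : G.dist c w ≤ W'.length := SimpleGraph.dist_le W'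
      have f4 : G.dist w b = G.dist b w := SimpleGraph.dist_comm
      have f4' : G.dist w c = G.dist c w := SimpleGraph.dist_comm
      have f5 : G.dist w a ≤ G.dist w c + G.dist c a := hC.dist_triangle
      have f6 : G.dist c a = G.dist a c := SimpleGraph.dist_comm
      have f7 : G.dist a c ≤ G.dist b a := hmd c h
      omega

lemma resolve_eq {V : Type*} {G : SimpleGraph V} (hC : G.Connected) {u u' w : V}
    (h1 : MaxDistant G u u') (h2 : MaxDistant G u' u)
    (hr : StronglyResolves G w u u') : w = u ∨ w = u' := by
  rcases hr with hr | hr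
  · right; by_contra hwv; exact resolve_aux hC h2 hwv hr
  · left; by_contra hwu; exact resolve_aux hC h1 hwu hr

end Aux

theorem statement6 {α β : Type*} [Fintype α] [Fintype β]
    (G : SimpleGraph α) (hG : G.Connected)
    {n n' : ℕ} (hn : Fintype.card α = n) (h2 : 2 ≤ n)
    (hn' : Fintype.card β = n') (h2' : 2 ≤ n') (v : β) :
    (sdim (rootedProd G (⊤ : SimpleGraph β) v) : ℤ) = n * ((n' : ℤ) - 1) - 1 := by
  classical
  obtain ⟨a0⟩ : Nonempty α := Fintype.card_pos_iff.mp (by omega)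
  obtain ⟨y0, hy0⟩ : ∃ y0 : β, y0 ≠ v := Fintype.exists_ne_of_one_lt_card (by omega) v
  obtain ⟨b0, hb0⟩ : ∃ b0 : α, b0 ≠ a0 := Fintype.exists_ne_of_one_lt_card (by omega) a0
  set R := rootedProd G (⊤ : SimpleGraph β) v with hRdef
  have hdist : ∀ p q : α × β, R.dist p q = D G v p q := rooted_dist_eq G v hG
  have hconn : R.Connected := by
    have : Nonempty (α × β) := ⟨(a0, v)⟩
    exact ⟨fun p q => ⟨(exists_walk G v hG p q).choose⟩⟩
  -- basic distance computations
  have hd1 : ∀ (a : α) (x y : β), x ≠ y → R.dist (a, x) (a, y) = 1 := by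
    intro a x y h
    rw [hdist]; unfold D; rw [if_pos rfl, if_neg h]
  have hd2 : ∀ (a b : α) (x y : β), a ≠ b →
      R.dist (a, x) (b, y) = G.dist a b + eps v x + eps v y := by
    intro a b x y h
    rw [hdist]; exact D_of_ne G v h
  -- the basis
  set w0 : α × β := (a0, y0) with hw0def
  set T : Finset (α × β) := Finset.univ ×ˢ Finset.univ.erase v with hTdef
  have hT : ∀ p : α × β, p ∈ T ↔ p.2 ≠ v := by
    intro p; simp [hTdef, Finset.mem_product]
  have hTcard : T.card = n * (n' - 1) := by
    rw [hTdef, Finset.card_product, Finset.card_erase_of_mem (Finset.mem_univ v)]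
    simp [hn, hn']
  set N := n * (n' - 1) with hNdef
  have hN2 : 2 ≤ N := le_trans (by omega)
    (Nat.mul_le_mul h2 (show 1 ≤ n' - 1 by omega))
  have hw0T : w0 ∈ T := (hT w0).mpr hy0
  set S : Finset (α × β) := T.erase w0 with hSdef
  have hScard : S.card = N - 1 := by
    rw [hSdef, Finset.card_erase_of_mem hw0T, hTcard]
  have hmemS : ∀ p : α × β, p ∈ S ↔ p ≠ w0 ∧ p.2 ≠ v := by
    intro p; rw [hSdef, Finset.mem_erase, hT]
  -- trivial resolving by an endpoint
  have hself : ∀ p q : α × β, StronglyResolves R p p q := by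
    intro p q
    exact Or.inr (by rw [SimpleGraph.dist_self, Nat.zero_add])
  have hself2 : ∀ p q : α × β, StronglyResolves R q p q := by
    intro p q
    exact Or.inl (by rw [SimpleGraph.dist_self, Nat.zero_add])
  -- symmetry of resolving
  have hswap : ∀ w p q : α × β, StronglyResolves R w p q → StronglyResolves R w q p :=
    fun w p q h => h.symm
  -- the main generator construction
  have hmain : ∀ p q : α × β, p.2 = v → (q = w0 ∨ q.2 = v) → p ≠ q →
      ∃ w ∈ S, StronglyResolves R w p q := by
    rintro ⟨a, x⟩ ⟨b, y⟩ hx hq hpq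
    simp only at hx
    subst x
    rcases hq with hq | hq
    · -- q = w0
      rw [hq]
      by_cases ha : a = a0
      · -- same copy as w0 : use (b0, y0)
        subst a
        refine ⟨(b0, y0), (hmemS _).mpr ⟨by simp [hw0def, Prod.ext_iff, hb0], hy0⟩, Or.inr ?_⟩
        rw [hw0def, hd2 b0 a0 y0 y0 hb0, hd2 b0 a0 y0 v hb0, hd1 a0 v y0 (Ne.symm hy0),
          eps_ne hy0, eps_root]
        all_goals omega
      · -- different copy : use (a, y0)
        refine ⟨(a, y0), (hmemS _).mpr ⟨by simp [hw0def, Prod.ext_iff, ha], hy0⟩, Or.inr ?_⟩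
        rw [hw0def, hd2 a a0 y0 y0 ha, hd1 a y0 v hy0, hd2 a a0 v y0 ha,
          eps_ne hy0, eps_root]
        all_goals omega
    · -- q is a root
      simp only at hq
      subst y
      have hab : a ≠ b := fun h => hpq (by rw [h])
      by_cases ha : (a, y0) = w0
      · -- use (b, y0)
        have hbw : (b, y0) ≠ w0 := fun h => hab (by
          have e1 : a = a0 := congrArg Prod.fst ha
          have e2 : b = a0 := congrArg Prod.fst h
          rw [e1, e2])
        refine ⟨(b, y0), (hmemS _).mpr ⟨hbw, hy0⟩, Or.inl ?_⟩
        rw [hd2 b a y0 v (Ne.symm hab), hd1 b y0 v hy0, hd2 b a v v (Ne.symm hab),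
          eps_ne hy0, eps_root]
        all_goals omega
      · refine ⟨(a, y0), (hmemS _).mpr ⟨ha, hy0⟩, Or.inr ?_⟩
        rw [hd2 a b y0 v hab, hd1 a y0 v hy0, hd2 a b v v hab, eps_ne hy0, eps_root]
        all_goals omega
  have hgen : IsStrongGenerator R (S : Set (α × β)) := by
    intro p q hpq
    by_cases hpS : p ∈ S
    · exact ⟨p, by simpa using hpS, hself p q⟩
    by_cases hqS : q ∈ S
    · exact ⟨q, by simpa using hqS, hself2 p q⟩
    have hp : p = w0 ∨ p.2 = v := by
      have := (hmemS p).not.mp hpS; tauto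
    have hq : q = w0 ∨ q.2 = v := by
      have := (hmemS q).not.mp hqS; tauto
    rcases hp with hp | hp
    · rcases hq with hq | hq
      · exact absurd (hp.trans hq.symm) hpq
      · obtain ⟨w, hwS, hres⟩ := hmain q p hq (Or.inl hp) (Ne.symm hpq)
        exact ⟨w, by simpa using hwS, hswap w q p hres⟩
    · obtain ⟨w, hwS, hres⟩ := hmain p q hp hq hpq
      exact ⟨w, by simpa using hwS, hres⟩
  -- lower bound
  have hMD : ∀ p q : α × β, p.2 ≠ v → q.2 ≠ v → p ≠ q → MaxDistant R p q := by
    rintro ⟨a, x⟩ ⟨b, y⟩ hx hy hpq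
    exact maxDistant_nonroot G v hG hx hy hpq
  have hlow : ∀ m : ℕ,
      (∃ S' : Finset (α × β), S'.card = m ∧ IsStrongGenerator R (S' : Set (α × β))) →
      N - 1 ≤ m := by
    rintro m ⟨S', rfl, hgen'⟩
    have hsub : (T \ S').card ≤ 1 := by
      rw [Finset.card_le_one]
      intro p hp q hq
      by_contra hne
      obtain ⟨w, hwS, hres⟩ := hgen' p q hne
      have hp' := Finset.mem_sdiff.mp hp
      have hq' := Finset.mem_sdiff.mp hq
      have hres' := resolve_eq hconn
        (hMD p q ((hT p).mp hp'.1) ((hT q).mp hq'.1) hne)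
        (hMD q p ((hT q).mp hq'.1) ((hT p).mp hp'.1) (Ne.symm hne)) hres
      rcases hres' with rfl | rfl
      · exact hp'.2 (by simpa using hwS)
      · exact hq'.2 (by simpa using hwS)
    have hcard : T.card ≤ (T \ S').card + S'.card := Finset.card_le_card_sdiff_add_card
    rw [hTcard] at hcard
    omega
  -- conclude
  have hmem : N - 1 ∈ {m : ℕ | ∃ S' : Finset (α × β), S'.card = m ∧
      IsStrongGenerator R (S' : Set (α × β))} := ⟨S, hScard, hgen⟩
  have hsd : sdim R = N - 1 :=
    le_antisymm (Nat.sInf_le hmem) (hlow _ (Nat.sInf_mem ⟨_, hmem⟩))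
  rw [hsd]
  have h1N : 1 ≤ N := by omega
  rw [Nat.cast_sub h1N, hNdef, Nat.cast_mul, Nat.cast_sub (show 1 ≤ n' by omega)]
  push_cast
  ring

end RootedStrong
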